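/- Let g : ℝ² → ℝ be continuously differentiable with ∂g/∂y(x,y) ≤ −δ for all (x,y) ∈ ℝ², where δ > 0. Let Ω ⊂ ℝⁿ be a bounded measurable set, and let x, η : Ω → ℝ and m : ℝ → ℝ be measurable with η square-integrable and with u ↦ η(u)·(g(x(u), m(x(u))+η(u)) − g(x(u), m(x(u)))) integrable. Then ∫_Ω η(u)·(g(x(u), m(x(u))+η(u)) − g(x(u), m(x(u)))) du ≤ −δ ∫_Ω η(u)² du. -/

import Mathlib

open MeasureTheory Real

lemma stmt2_key (δ : ℝ) (g : ℝ → ℝ → ℝ)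
    (hg : ContDiff ℝ 1 (fun p : ℝ × ℝ => g p.1 p.2))
    (hgy : ∀ a b : ℝ, deriv (fun s => g a s) b ≤ -δ)
    (a b e : ℝ) : e * (g a (b + e) - g a b) ≤ -δ * e ^ 2 := by
  have hf : Differentiable ℝ (fun s => g a s) := by
    have : (fun s => g a s) = (fun p : ℝ × ℝ => g p.1 p.2) ∘ (fun s => (a, s)) := rfl
    rw [this]
    exact (hg.differentiable one_ne_zero).comp (Differentiable.prodMk (differentiable_const a) differentiable_id)
  have hanti : Antitone (fun s => g a s + δ * s) := by
    apply antitone_of_deriv_nonpos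
    · exact hf.add ((differentiable_const δ).mul differentiable_id)
    · intro s
      have hd : deriv (fun s => g a s + δ * s) s = deriv (fun s => g a s) s + δ := by
        have h2 : HasDerivAt (fun s : ℝ => g a s + δ * s)
            (deriv (fun s => g a s) s + δ) s := by
          exact (((hf s).hasDerivAt).add ((hasDerivAt_id s).const_mul δ)).congr_deriv (by simp)
        exact h2.deriv
      rw [hd]
      linarith [hgy a s]
  rcases le_or_gt 0 e with he | he
  · have h1 : g a (b + e) + δ * (b + e) ≤ g a b + δ * b := hanti (by linarith)
    nlinarith
  · have h1 : g a b + δ * b ≤ g a (b + e) + δ * (b + e) := hanti (by linarith)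
    nlinarith

/-- If g : ℝ² → ℝ is C¹ with ∂g/∂y ≤ -δ everywhere (δ > 0), Ω is a bounded
measurable set, x, η, m measurable with η square-integrable and the integrand integrable,
then ∫_Ω η (g(x, m(x)+η) - g(x, m(x))) ≤ -δ ∫_Ω η². -/
theorem stmt2 (n : ℕ) (Ω : Set (Fin n → ℝ)) (hΩm : MeasurableSet Ω)
    (hΩb : Bornology.IsBounded Ω)
    (δ : ℝ) (hδ : 0 < δ)
    (g : ℝ → ℝ → ℝ) (hg : ContDiff ℝ 1 (fun p : ℝ × ℝ => g p.1 p.2))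
    (hgy : ∀ a b : ℝ, deriv (fun s => g a s) b ≤ -δ)
    (m : ℝ → ℝ) (hmm : Measurable m)
    (x η : (Fin n → ℝ) → ℝ) (hxm : Measurable x) (hηm : Measurable η)
    (hη2 : IntegrableOn (fun u => (η u) ^ 2) Ω)
    (hint : IntegrableOn
      (fun u => η u * (g (x u) (m (x u) + η u) - g (x u) (m (x u)))) Ω) :
    (∫ u in Ω, η u * (g (x u) (m (x u) + η u) - g (x u) (m (x u)))) ≤
      -δ * ∫ u in Ω, (η u) ^ 2 := by
  have h1 : (∫ u in Ω, η u * (g (x u) (m (x u) + η u) - g (x u) (m (x u)))) ≤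
      ∫ u in Ω, -δ * (η u) ^ 2 := by
    apply setIntegral_mono_on hint (hη2.const_mul _) hΩm
    intro u _
    exact stmt2_key δ g hg hgy (x u) (m (x u)) (η u)
  rwa [integral_const_mul] at h1
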